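/- Integral of a B-spline from an interior knot: let k ≥ 1 and let j ≤ i be integers, and let x ∈ ℝ satisfy t_i < x ≤ t_{j+k}; let s ∈ ℤ be such that t_{s−1} < x ≤ t_s. Then ∫_{t_i}^{x} B_{j,k}(u) du = ((t_{j+k} − t_j)/k) · ( Σ_{m=j}^{s−1} B_{m,k+1}(x) − Σ_{m=j}^{i−1} B_{m,k+1}(t_i) ), where each sum is over the indicated integer range (empty sums being zero). -/

import Mathlib

/-- B-splines of order `k ≥ 1` with knot sequence `t`, defined by the Cox–de Boor recursion:
`B_{j,1}(x) = 1` if `t j ≤ x < t (j+1)` and `0` otherwise; and for `k ≥ 2`,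
`B_{j,k}(x) = ((x − t_j)/(t_{j+k−1} − t_j)) B_{j,k−1}(x)
            + ((t_{j+k} − x)/(t_{j+k} − t_{j+1})) B_{j+1,k−1}(x)`.
(The value for order `0` is irrelevant and set to `0`.) -/
noncomputable def bspline (t : ℤ → ℝ) : ℕ → ℤ → ℝ → ℝ
  | 0, _, _ => 0
  | 1, j, x => if t j ≤ x ∧ x < t (j + 1) then 1 else 0
  | (k + 2), j, x =>
      ((x - t j) / (t (j + (k : ℤ) + 1) - t j)) * bspline t (k + 1) j x +
      ((t (j + (k : ℤ) + 2) - x) / (t (j + (k : ℤ) + 2) - t (j + 1))) *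
        bspline t (k + 1) (j + 1) x

set_option maxHeartbeats 1000000

lemma bspline_support {t : ℤ → ℝ} (ht : StrictMono t) :
    ∀ (k : ℕ) (m : ℤ) (x : ℝ), x < t m ∨ t (m + k) ≤ x → bspline t k m x = 0
  | 0, m, x, _ => rfl
  | 1, m, x, h => by
      simp only [bspline, ite_eq_right_iff, Nat.cast_one] at *
      intro hc
      rcases h with h | h
      · exact absurd hc.1 (not_le.2 h)
      · exact absurd hc.2 (not_lt.2 h)
  | (k+2), m, x, h => by
      have h1 : bspline t (k+1) m x = 0 := by
        apply bspline_support ht (k+1) m x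
        rcases h with h | h
        · exact Or.inl h
        · refine Or.inr (le_trans (ht.monotone ?_) h)
          push_cast; omega
      have h2 : bspline t (k+1) (m+1) x = 0 := by
        apply bspline_support ht (k+1) (m+1) x
        rcases h with h | h
        · exact Or.inl (lt_trans h (ht (by omega)))
        · refine Or.inr (le_trans (ht.monotone ?_) h)
          push_cast; omega
      simp [bspline, h1, h2]

lemma bspline_one_eventually_const {t : ℤ → ℝ} (ht : StrictMono t) (m l : ℤ) {x : ℝ}
    (h1 : t l < x) (h2 : x < t (l + 1)) :
    ∀ᶠ y in nhds x, bspline t 1 m y = bspline t 1 m x := by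
  have hop : Set.Ioo (t l) (t (l+1)) ∈ nhds x := Ioo_mem_nhds h1 h2
  filter_upwards [hop] with y hy
  rcases lt_trichotomy m l with hml | rfl | hml
  · have hml' : m + 1 ≤ l := by omega
    have hy' : ¬ (y < t (m+1)) := not_lt.2 ((ht.monotone hml').trans hy.1.le)
    have hx' : ¬ (x < t (m+1)) := not_lt.2 ((ht.monotone hml').trans h1.le)
    simp [bspline, hy', hx']
  · have : t m ≤ y ∧ y < t (m+1) := ⟨hy.1.le, hy.2⟩
    have : t m ≤ x ∧ x < t (m+1) := ⟨h1.le, h2⟩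
    simp_all [bspline]
  · have hml' : l + 1 ≤ m := by omega
    have hy' : ¬ (t m ≤ y) := not_le.2 (hy.2.trans_le (ht.monotone hml'))
    have hx' : ¬ (t m ≤ x) := not_le.2 (h2.trans_le (ht.monotone hml'))
    simp [bspline, hy', hx']

lemma sub_ne {t : ℤ → ℝ} (ht : StrictMono t) {a b : ℤ} (h : a < b) : t b - t a ≠ 0 :=
  sub_ne_zero.2 (ht h).ne'

lemma bspline_alg (K x u v w p q r a b c : ℝ) (n1 : p-u ≠ 0) (n2 : q-u ≠ 0)
    (n3 : q-v ≠ 0) (n4 : r-v ≠ 0) (n5 : r-w ≠ 0) :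
    (K+1) * ( ((x-u)/(p-u)*a + (q-x)/(q-v)*b)/(q-u) - ((x-v)/(q-v)*b + (r-x)/(r-w)*c)/(r-v) )
    = 1/(q-u) * ((x-u)/(p-u)*a + (q-x)/(q-v)*b)
    + (x-u)/(q-u) * (K*(a/(p-u) - b/(q-v)))
    + ( -1/(r-v) * ((x-v)/(q-v)*b + (r-x)/(r-w)*c)
      + (r-x)/(r-v) * (K*(b/(q-v) - c/(r-w))) ) := by
  field_simp
  ring

lemma hasDerivAt_bspline {t : ℤ → ℝ} (ht : StrictMono t) :
    ∀ (k : ℕ) (m l : ℤ) (x : ℝ), t l < x → x < t (l + 1) →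
    HasDerivAt (bspline t (k+1) m)
      ((k : ℝ) * (bspline t k m x / (t (m + (k:ℤ)) - t m)
        - bspline t k (m+1) x / (t (m + (k:ℤ) + 1) - t (m+1)))) x := by
  intro k
  induction k with
  | zero =>
    intro m l x h1 h2
    have h := (hasDerivAt_const x (bspline t 1 m x)).congr_of_eventuallyEq
      (bspline_one_eventually_const ht m l h1 h2)
    simpa using h
  | succ k IH =>
    intro m l x h1 h2
    -- derivative of coefficient functions
    have hd1 : t (m + (k:ℤ) + 1) - t m ≠ 0 := sub_ne ht (by omega)
    have hd2 : t (m + (k:ℤ) + 2) - t (m+1) ≠ 0 := sub_ne ht (by omega)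
    have hα : HasDerivAt (fun y => (y - t m) / (t (m + (k:ℤ) + 1) - t m))
        (1 / (t (m + (k:ℤ) + 1) - t m)) x := by
      simpa using ((hasDerivAt_id x).sub_const (t m)).div_const (t (m + (k:ℤ) + 1) - t m)
    have hβ : HasDerivAt (fun y => (t (m + (k:ℤ) + 2) - y) / (t (m + (k:ℤ) + 2) - t (m+1)))
        (-1 / (t (m + (k:ℤ) + 2) - t (m+1))) x := by
      simpa using ((hasDerivAt_id x).const_sub (t (m + (k:ℤ) + 2))).div_const
        (t (m + (k:ℤ) + 2) - t (m+1))
    have hB1 := IH m l x h1 h2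
    have hB2 := IH (m+1) l x h1 h2
    have hsum : HasDerivAt (fun y => (y - t m) / (t (m + (k:ℤ) + 1) - t m) * bspline t (k+1) m y
        + (t (m + (k:ℤ) + 2) - y) / (t (m + (k:ℤ) + 2) - t (m+1)) * bspline t (k+1) (m+1) y) _ x :=
      (hα.mul hB1).add (hβ.mul hB2)
    have heq : (fun y => (y - t m) / (t (m + (k:ℤ) + 1) - t m) * bspline t (k+1) m y
        + (t (m + (k:ℤ) + 2) - y) / (t (m + (k:ℤ) + 2) - t (m+1)) * bspline t (k+1) (m+1) y)
        = bspline t (k+2) m := by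
      funext y; simp [bspline]
    rw [heq] at hsum
    convert hsum using 1
    clear hsum hα hβ hB1 hB2 heq hd1 hd2
    rcases k with _ | k'
    · norm_num [bspline]
      split_ifs <;> ring
    · push_cast
      simp only [bspline]
      have e2 : (m:ℤ) + 1 + (k'+1) + 1 = m + k' + 3 := by ring
      have e1 : (m:ℤ) + 1 + (k'+1) = m + k' + 2 := by ring
      have e5 : (m:ℤ) + (k'+1) + 2 = m + k' + 3 := by ring
      have e4 : (m:ℤ) + (k'+1) + 1 = m + k' + 2 := by ring
      have e3 : (m:ℤ) + (k'+1) = m + k' + 1 := by ring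
      have e7 : (m:ℤ) + 1 + k' + 1 = m + k' + 2 := by ring
      have e6 : (m:ℤ) + 1 + k' = m + k' + 1 := by ring
      have e8 : (m:ℤ) + 1 + 1 = m + 2 := by ring
      have e10 : (m:ℤ) + (k'+1+1) + 1 = m + k' + 3 := by ring
      have e9 : (m:ℤ) + (k'+1+1) = m + k' + 2 := by ring
      have e11 : (m:ℤ) + k' + 1 + 2 = m + k' + 3 := by ring
      rw [e2, e1, e5, e4, e3, e7, e6, e8, e10, e9, e11]
      exact bspline_alg ((k':ℝ)+1) x (t m) (t (m+1)) (t (m+2)) (t (m+(k':ℤ)+1))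
        (t (m+(k':ℤ)+2)) (t (m+(k':ℤ)+3)) (bspline t (k'+1) m x) (bspline t (k'+1) (m+1) x)
        (bspline t (k'+1) (m+2) x) (sub_ne ht (by omega)) (sub_ne ht (by omega))
        (sub_ne ht (by omega)) (sub_ne ht (by omega)) (sub_ne ht (by omega))

lemma bspline_two_eq {t : ℤ → ℝ} (ht : StrictMono t) (m : ℤ) (x : ℝ) :
    bspline t 2 m x =
      max 0 (min ((x - t m) / (t (m+1) - t m)) ((t (m+2) - x) / (t (m+2) - t (m+1)))) := by
  have h1 : (0:ℝ) < t (m+1) - t m := sub_pos.2 (ht (by omega))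
  have h2 : (0:ℝ) < t (m+2) - t (m+1) := sub_pos.2 (ht (by omega))
  have hb : bspline t 2 m x =
      ((x - t m) / (t (m+1) - t m)) * bspline t 1 m x +
      ((t (m+2) - x) / (t (m+2) - t (m+1))) * bspline t 1 (m+1) x := by
    show ((x - t m) / (t (m + (0:ℤ) + 1) - t m)) * _ + _ = _
    norm_num
  rcases lt_or_ge x (t m) with h | h
  · have hx1 : bspline t 1 m x = 0 := by simp [bspline]; intro h'; linarith
    have hx2 : bspline t 1 (m+1) x = 0 := by
      have : x < t (m+1) := h.trans (ht (by omega))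
      simp [bspline]; intro h'; linarith
    rw [hb, hx1, hx2]
    rw [max_eq_left]
    · ring
    refine le_trans (min_le_left _ _) ?_
    apply div_nonpos_of_nonpos_of_nonneg <;> linarith
  rcases lt_or_ge x (t (m+1)) with h' | h'
  · have hx1 : bspline t 1 m x = 1 := by simp [bspline]; exact ⟨h, h'⟩
    have hx2 : bspline t 1 (m+1) x = 0 := by simp [bspline]; intro h''; linarith
    rw [hb, hx1, hx2]
    have hle : (x - t m) / (t (m+1) - t m) ≤ (t (m+2) - x) / (t (m+2) - t (m+1)) := by
      rw [div_le_div_iff₀ h1 h2]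
      have h3 : t (m+1) ≤ t (m+2) := (ht (by omega)).le
      nlinarith
    rw [min_eq_left hle, max_eq_right (div_nonneg (by linarith) h1.le)]
    ring
  rcases lt_or_ge x (t (m+2)) with h'' | h''
  · have hx1 : bspline t 1 m x = 0 := by simp [bspline]; intro; linarith
    have hx2 : bspline t 1 (m+1) x = 1 := by
      simp [bspline]
      constructor
      · exact h'
      · convert h'' using 2; ring
    rw [hb, hx1, hx2]
    have hle : (t (m+2) - x) / (t (m+2) - t (m+1)) ≤ (x - t m) / (t (m+1) - t m) := by
      rw [div_le_div_iff₀ h2 h1]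
      have h3 : t m ≤ t (m+1) := (ht (by omega)).le
      nlinarith
    rw [min_eq_right hle, max_eq_right (div_nonneg (by linarith) h2.le)]
    ring
  · have hx1 : bspline t 1 m x = 0 := by
      simp [bspline]; intro; linarith [(ht (show m+1 < m+2 by omega)).le]
    have hx2 : bspline t 1 (m+1) x = 0 := by
      simp [bspline]; intro h3
      rw [show m+1+1 = m+2 by ring]; exact h''
    rw [hb, hx1, hx2]
    rw [max_eq_left]
    · ring
    refine le_trans (min_le_right _ _) ?_
    apply div_nonpos_of_nonpos_of_nonneg <;> linarith

lemma bspline_continuous {t : ℤ → ℝ} (ht : StrictMono t) :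
    ∀ (k : ℕ) (m : ℤ), Continuous (bspline t (k + 2) m) := by
  intro k
  induction k with
  | zero =>
    intro m
    have : bspline t 2 m = fun x =>
        max 0 (min ((x - t m) / (t (m+1) - t m)) ((t (m+2) - x) / (t (m+2) - t (m+1)))) := by
      funext x; exact bspline_two_eq ht m x
    rw [this]
    exact continuous_const.max ((((continuous_id.sub continuous_const).div_const _).min
      ((continuous_const.sub continuous_id).div_const _)))
  | succ k IH =>
    intro m
    have heq : bspline t (k + 1 + 2) m = fun x =>
        ((x - t m) / (t (m + ((k:ℤ)+1) + 1) - t m)) * bspline t (k + 2) m x +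
        ((t (m + ((k:ℤ)+1) + 2) - x) / (t (m + ((k:ℤ)+1) + 2) - t (m + 1))) *
          bspline t (k + 2) (m + 1) x := by
      funext x
      simp only [bspline]
      push_cast
      rfl
    rw [show k + 1 + 2 = k + 3 from rfl] at heq
    rw [heq]
    refine (((continuous_id.sub continuous_const).div_const _).mul (IH m)).add
      (((continuous_const.sub continuous_id).div_const _).mul (IH (m+1)))

lemma bspline_zero_at_left {t : ℤ → ℝ} (ht : StrictMono t) (k : ℕ) (hk : 1 ≤ k) (i : ℤ) :
    bspline t (k + 1) i (t i) = 0 := by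
  obtain ⟨k', rfl⟩ : ∃ k', k = k' + 1 := ⟨k - 1, by omega⟩
  show bspline t (k' + 2) i (t i) = 0
  have h2 : bspline t (k' + 1) (i + 1) (t i) = 0 :=
    bspline_support ht (k'+1) (i+1) (t i) (Or.inl (ht (by omega)))
  simp [bspline, h2]

lemma bspline_intervalIntegrable {t : ℤ → ℝ} (ht : StrictMono t) (k : ℕ) (hk : 1 ≤ k)
    (m : ℤ) (a b : ℝ) : IntervalIntegrable (bspline t k m) MeasureTheory.volume a b := by
  match k, hk with
  | 1, _ =>
    have : bspline t 1 m = (Set.Ico (t m) (t (m+1))).indicator (fun _ => (1:ℝ)) := by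
      funext x
      simp [bspline, Set.indicator_apply, Set.mem_Ico]
    rw [this]
    apply MeasureTheory.IntegrableOn.intervalIntegrable
    apply MeasureTheory.Integrable.indicator _ measurableSet_Ico
    exact MeasureTheory.integrableOn_const measure_Icc_lt_top.ne
  | (k' + 2), _ =>
    exact (bspline_continuous ht k' m).intervalIntegrable a b

lemma sum_telescope_Icc_aux (g : ℤ → ℝ) (a : ℤ) : ∀ n : ℕ,
    ∑ m ∈ Finset.Icc a (a + (n:ℤ)), (g m - g (m + 1)) = g a - g (a + (n:ℤ) + 1) := by
  intro n
  induction n with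
  | zero => simp
  | succ n IH =>
    have e : a + ((n:ℤ)+1) = (a + (n:ℤ)) + 1 := by ring
    push_cast
    have hins : Finset.Icc a (a+(n:ℤ)+1) = insert (a+(n:ℤ)+1) (Finset.Icc a (a+(n:ℤ))) := by
      ext y; simp only [Finset.mem_Icc, Finset.mem_insert]; omega
    rw [e, hins, Finset.sum_insert (by simp only [Finset.mem_Icc]; omega), IH]
    ring

lemma sum_telescope_Icc (g : ℤ → ℝ) (a b : ℤ) (hab : a ≤ b) :
    ∑ m ∈ Finset.Icc a b, (g m - g (m + 1)) = g a - g (b + 1) := by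
  have := sum_telescope_Icc_aux g a (b - a).toNat
  rw [Int.toNat_of_nonneg (by omega)] at this
  simpa using this

lemma bspline_succ_continuous {t : ℤ → ℝ} (ht : StrictMono t) (k : ℕ) (hk : 1 ≤ k) (m : ℤ) :
    Continuous (bspline t (k + 1) m) := by
  obtain ⟨k', rfl⟩ : ∃ k', k = k' + 1 := ⟨k - 1, by omega⟩
  exact bspline_continuous ht k' m

lemma bspline_integral_single {t : ℤ → ℝ} (ht : StrictMono t) (k : ℕ) (hk : 1 ≤ k)
    (j i : ℤ) (hji : j ≤ i) (x : ℝ) (hx₁ : t i < x) (hx₂ : x ≤ t (i + 1)) :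
    ∫ u in (t i)..x, bspline t k j u =
      ((t (j + (k:ℤ)) - t j) / (k:ℝ)) *
        ((∑ m ∈ Finset.Icc j i, bspline t (k+1) m x) -
         (∑ m ∈ Finset.Icc j (i-1), bspline t (k+1) m (t i))) := by
  set c : ℝ := (t (j + (k:ℤ)) - t j) / (k:ℝ) with hc
  set F : ℝ → ℝ := fun y => c * ∑ m ∈ Finset.Icc j i, bspline t (k+1) m y with hF
  have hFTC : ∫ u in (t i)..x, bspline t k j u = F x - F (t i) := by
    apply intervalIntegral.integral_eq_sub_of_hasDeriv_right_of_le hx₁.le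
    · apply Continuous.continuousOn
      exact continuous_const.mul (continuous_finset_sum _
        (fun m _ => bspline_succ_continuous ht k hk m))
    · intro u hu
      have h1 : t i < u := hu.1
      have h2 : u < t (i + 1) := lt_of_lt_of_le hu.2 hx₂
      have hderiv : HasDerivAt F (c * ∑ m ∈ Finset.Icc j i,
          ((k : ℝ) * (bspline t k m u / (t (m + (k:ℤ)) - t m))
           - (k : ℝ) * (bspline t k (m+1) u / (t (m + 1 + (k:ℤ)) - t (m+1))))) u := by
        apply HasDerivAt.const_mul
        apply HasDerivAt.fun_sum
        intro m _
        have h := hasDerivAt_bspline ht k m i u h1 h2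
        rw [show m + 1 + (k:ℤ) = m + (k:ℤ) + 1 by ring, ← mul_sub]
        exact h
      have hval : c * ∑ m ∈ Finset.Icc j i,
          ((k : ℝ) * (bspline t k m u / (t (m + (k:ℤ)) - t m))
           - (k : ℝ) * (bspline t k (m+1) u / (t (m + 1 + (k:ℤ)) - t (m+1))))
          = bspline t k j u := by
        rw [sum_telescope_Icc (fun m => (k : ℝ) * (bspline t k m u / (t (m + (k:ℤ)) - t m)))
          j i hji]
        have hz : bspline t k (i+1) u = 0 :=
          bspline_support ht k (i+1) u (Or.inl h2)
        rw [hz]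
        have hk0 : (k : ℝ) ≠ 0 := Nat.cast_ne_zero.2 (by omega)
        have hd : t (j + (k:ℤ)) - t j ≠ 0 := sub_ne ht (by omega)
        field_simp [hc]
        rw [hc, div_mul_cancel₀ _ hk0]
        ring
      rw [← hval]
      exact hderiv.hasDerivWithinAt
    · exact bspline_intervalIntegrable ht k hk j (t i) x
  rw [hFTC, hF]
  have hsplit : F (t i) = c * ∑ m ∈ Finset.Icc j (i-1), bspline t (k+1) m (t i) := by
    have hins : Finset.Icc j i = insert i (Finset.Icc j (i-1)) := by
      ext y; simp only [Finset.mem_Icc, Finset.mem_insert]; omega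
    rw [hF]
    simp only
    rw [hins, Finset.sum_insert (by simp only [Finset.mem_Icc]; omega),
      bspline_zero_at_left ht k hk i, zero_add]
  rw [← hF, hsplit]
  ring

lemma bspline_integral_aux {t : ℤ → ℝ} (ht : StrictMono t) (k : ℕ) (hk : 1 ≤ k)
    (j s : ℤ) (x : ℝ) (hs₁ : t (s - 1) < x) (hs₂ : x ≤ t s) :
    ∀ (n : ℕ) (i : ℤ), s - 1 - i = (n : ℤ) → j ≤ i → t i < x →
    ∫ u in (t i)..x, bspline t k j u =
      ((t (j + (k:ℤ)) - t j) / (k:ℝ)) *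
        ((∑ m ∈ Finset.Icc j (s-1), bspline t (k+1) m x) -
         (∑ m ∈ Finset.Icc j (i-1), bspline t (k+1) m (t i))) := by
  intro n
  induction n with
  | zero =>
    intro i hn hji hx₁
    have hi : i = s - 1 := by omega
    subst hi
    have := bspline_integral_single ht k hk j (s-1) hji x hx₁
      (by rw [show s - 1 + 1 = s by ring]; exact hs₂)
    exact this
  | succ n IH =>
    intro i hn hji hx₁
    have hi1 : i + 1 ≤ s - 1 := by omega
    have h2 : t (i + 1) < x := lt_of_le_of_lt (ht.monotone hi1) hs₁
    have h1 : t i < t (i + 1) := ht (by omega)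
    rw [← intervalIntegral.integral_add_adjacent_intervals
      (bspline_intervalIntegrable ht k hk j (t i) (t (i+1)))
      (bspline_intervalIntegrable ht k hk j (t (i+1)) x)]
    rw [bspline_integral_single ht k hk j i hji (t (i+1)) h1 le_rfl]
    rw [IH (i+1) (by omega) (by omega) h2]
    rw [show i + 1 - 1 = i by ring]
    ring

/-- Integral of a B-spline from an interior knot: for order `k ≥ 1`, integers `j ≤ i`,
`t_i < x ≤ t_{j+k}`, and `s` such that `t_{s−1} < x ≤ t_s`,
`∫_{t_i}^{x} B_{j,k}(u) du
 = ((t_{j+k} − t_j)/k) (Σ_{m=j}^{s−1} B_{m,k+1}(x) − Σ_{m=j}^{i−1} B_{m,k+1}(t_i))`. -/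
theorem bspline_integral_from_interior_knot (t : ℤ → ℝ) (ht : StrictMono t) (k : ℕ)
    (hk : 1 ≤ k) (j i s : ℤ) (hji : j ≤ i) (x : ℝ) (hx₁ : t i < x)
    (hx₂ : x ≤ t (j + (k : ℤ))) (hs₁ : t (s - 1) < x) (hs₂ : x ≤ t s) :
    ∫ u in (t i)..x, bspline t k j u =
      ((t (j + (k : ℤ)) - t j) / (k : ℝ)) *
        ((∑ m ∈ Finset.Icc j (s - 1), bspline t (k + 1) m x) -
         (∑ m ∈ Finset.Icc j (i - 1), bspline t (k + 1) m (t i))) := by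
  have his : i < s := by
    by_contra h
    push_neg at h
    exact absurd (lt_of_lt_of_le hx₁ hs₂) (not_lt.2 (ht.monotone h))
  exact bspline_integral_aux ht k hk j s x hs₁ hs₂ (s - 1 - i).toNat i
    (by omega) hji hx₁
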